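/- Let A and S be n×n complex matrices, Cu and S_c p×n complex matrices, δ, δ_c ∈ ℝ, and s ∈ ℂ with Φ := sI − A invertible. Then ‖Cu·Φ⁻¹·δS + δ_c·S_c‖ ≤ ‖[Cu·Φ⁻¹·S , S_c]‖ · √(δ² + δ_c²), where [Cu·Φ⁻¹·S , S_c] denotes the p×2n matrix obtained by horizontal block concatenation and ‖·‖ is the L2 operator norm. -/

import Mathlib

open scoped Matrix.Norms.L2Operator

lemma l2_norm_one_le {n : ℕ} : ‖(1 : Matrix (Fin n) (Fin n) ℂ)‖ ≤ 1 := by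
  rw [Matrix.cstar_norm_def, map_one]
  exact ContinuousLinearMap.norm_id_le

lemma l2_norm_fromRows_smul_one {n : ℕ} (δ δc : ℝ) :
    ‖Matrix.fromRows ((δ : ℂ) • (1 : Matrix (Fin n) (Fin n) ℂ))
      ((δc : ℂ) • (1 : Matrix (Fin n) (Fin n) ℂ))‖ ≤ Real.sqrt (δ ^ 2 + δc ^ 2) := by
  set R := Matrix.fromRows ((δ : ℂ) • (1 : Matrix (Fin n) (Fin n) ℂ))
      ((δc : ℂ) • (1 : Matrix (Fin n) (Fin n) ℂ))
  have hsq : ‖R‖ * ‖R‖ ≤ δ ^ 2 + δc ^ 2 := by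
    rw [← Matrix.l2_opNorm_conjTranspose_mul_self]
    have : Matrix.conjTranspose R * R = ((δ ^ 2 + δc ^ 2 : ℝ) : ℂ) • (1 : Matrix (Fin n) (Fin n) ℂ) := by
      simp only [R, Matrix.conjTranspose_fromRows_eq_fromCols_conjTranspose,
        Matrix.fromCols_mul_fromRows, Matrix.conjTranspose_smul, Matrix.conjTranspose_one]
      rw [Matrix.smul_mul, Matrix.mul_smul, Matrix.smul_mul, Matrix.mul_smul, one_mul,
        smul_smul, smul_smul, ← add_smul]
      congr 1
      push_cast
      ring_nf
      simp [Complex.conj_ofReal]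
      ring
    rw [this, norm_smul]
    calc ‖((δ ^ 2 + δc ^ 2 : ℝ) : ℂ)‖ * ‖(1 : Matrix (Fin n) (Fin n) ℂ)‖
        ≤ ‖((δ ^ 2 + δc ^ 2 : ℝ) : ℂ)‖ * 1 :=
          mul_le_mul_of_nonneg_left l2_norm_one_le (norm_nonneg _)
      _ = |δ ^ 2 + δc ^ 2| := by rw [mul_one, Complex.norm_real, Real.norm_eq_abs]
      _ = δ ^ 2 + δc ^ 2 := abs_of_nonneg (by positivity)
  have h0 : (0:ℝ) ≤ δ ^ 2 + δc ^ 2 := by positivity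
  rw [show Real.sqrt (δ ^ 2 + δc ^ 2) = Real.sqrt (δ ^ 2 + δc ^ 2) from rfl]
  exact (Real.le_sqrt (norm_nonneg R) h0).mpr (by rw [sq]; exact hsq)

/-- Direct (SSV-free) bound on the perturbed-scaled error transfer matrix:
`‖CuΦ⁻¹δS + δ_c S_c‖ ≤ ‖[CuΦ⁻¹S , S_c]‖ √(δ² + δ_c²)`. -/
theorem direct_bound_Tp
    {n p : ℕ}
    (A S : Matrix (Fin n) (Fin n) ℂ) (Cu Sc : Matrix (Fin p) (Fin n) ℂ)
    (δ δc : ℝ) (s : ℂ)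
    (hΦ : IsUnit (s • (1 : Matrix (Fin n) (Fin n) ℂ) - A)) :
    ‖Cu * (s • (1 : Matrix (Fin n) (Fin n) ℂ) - A)⁻¹ * ((δ : ℂ) • S) + (δc : ℂ) • Sc‖
      ≤ ‖Matrix.fromCols (Cu * (s • (1 : Matrix (Fin n) (Fin n) ℂ) - A)⁻¹ * S) Sc‖
        * Real.sqrt (δ ^ 2 + δc ^ 2) := by
  set B := Cu * (s • (1 : Matrix (Fin n) (Fin n) ℂ) - A)⁻¹ * S
  have key : Cu * (s • (1 : Matrix (Fin n) (Fin n) ℂ) - A)⁻¹ * ((δ : ℂ) • S) + (δc : ℂ) • Sc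
      = Matrix.fromCols B Sc *
        Matrix.fromRows ((δ : ℂ) • (1 : Matrix (Fin n) (Fin n) ℂ))
          ((δc : ℂ) • (1 : Matrix (Fin n) (Fin n) ℂ)) := by
    simp [B, Matrix.fromCols_mul_fromRows, Matrix.mul_smul, Matrix.smul_mul]
  rw [key]
  calc ‖Matrix.fromCols B Sc * _‖
      ≤ ‖Matrix.fromCols B Sc‖ * ‖Matrix.fromRows ((δ : ℂ) • (1 : Matrix (Fin n) (Fin n) ℂ))
          ((δc : ℂ) • (1 : Matrix (Fin n) (Fin n) ℂ))‖ := Matrix.l2_opNorm_mul _ _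
    _ ≤ ‖Matrix.fromCols B Sc‖ * Real.sqrt (δ ^ 2 + δc ^ 2) :=
        mul_le_mul_of_nonneg_left (l2_norm_fromRows_smul_one δ δc) (norm_nonneg _)
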